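/- Let X be a real Banach space, let x₀ ∈ S_X be a Daugavet point and let y ∈ S_X be a denting point of B_X. Then ‖x₀ − y‖ = 2. -/
import Mathlib


variable {X : Type*} [NormedAddCommGroup X] [NormedSpace ℝ X] [CompleteSpace X]

/-- The slice `S(f, α)` of the closed unit ball of `X`. -/
def ballSlice (f : X →L[ℝ] ℝ) (α : ℝ) : Set X := {y | ‖y‖ ≤ 1 ∧ f y > 1 - α}

/-- `x` is a Daugavet point: for every slice of the unit ball and every `ε > 0`
there is a point of the slice at distance `> 2 - ε` from `x`. -/
def IsDaugavetPoint (x : X) : Prop :=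
  ∀ (f : X →L[ℝ] ℝ), ‖f‖ = 1 → ∀ α : ℝ, 0 < α →
    ∀ ε : ℝ, 0 < ε → ∃ y ∈ ballSlice f α, ‖x - y‖ > 2 - ε

/-- `y` is a denting point of the unit ball: there are slices containing `y` of
arbitrarily small diameter. -/
def IsDentingPoint (y : X) : Prop :=
  ∀ ε : ℝ, 0 < ε → ∃ (f : X →L[ℝ] ℝ) (α : ℝ), ‖f‖ = 1 ∧ 0 < α ∧
    y ∈ ballSlice f α ∧ Metric.diam (ballSlice f α) < ε

theorem daugavet_point_dist_denting_point (x₀ : X) (hx₀ : ‖x₀‖ = 1)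
    (hD : IsDaugavetPoint x₀) (y : X) (hy : ‖y‖ = 1) (hdent : IsDentingPoint y) :
    ‖x₀ - y‖ = 2 := by
  have hle : ‖x₀ - y‖ ≤ 2 := by
    calc ‖x₀ - y‖ ≤ ‖x₀‖ + ‖y‖ := norm_sub_le _ _
    _ = 2 := by rw [hx₀, hy]; norm_num
  refine le_antisymm hle (le_of_forall_sub_le ?_)
  intro ε hε
  obtain ⟨f, α, hf, hα, hyS, hdiam⟩ := hdent (ε/2) (by linarith)
  obtain ⟨z, hzS, hz⟩ := hD f hf α hα (ε/2) (by linarith)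
  have hbdd : Bornology.IsBounded (ballSlice f α) := by
    apply Bornology.IsBounded.subset (Metric.isBounded_closedBall (x := (0:X)) (r := 1))
    intro w hw
    simpa [Metric.mem_closedBall, dist_zero_right] using hw.1
  have hd : dist z y ≤ Metric.diam (ballSlice f α) :=
    Metric.dist_le_diam_of_mem hbdd hzS hyS
  have : ‖x₀ - z‖ ≤ ‖x₀ - y‖ + ‖y - z‖ := norm_sub_le_norm_sub_add_norm_sub _ _ _
  have hyz : ‖y - z‖ < ε/2 := by
    rw [← dist_eq_norm]; rw [dist_comm]; linarith
  linarith
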